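/- Consider bond percolation with parameter p = n^{−α} on the n-dimensional hypercube, let 0 < β < α − 1/2, and let l = n^β (so l ≥ 1). For any vertex v and any vertex x at Hamming distance l from v, the probability that v is connected to x by an open path contained in the ball S of radius l around v is at most (lp)^l / (1 − n^{2β+1−2α}) = n^{(β−α)n^β} / (1 − n^{2β+1−2α}). -/

import Mathlib

open MeasureTheory ProbabilityTheory
open scoped ENNReal

/-- Bernoulli measure on `Bool` with parameter `p` (truncated to `[0,1]`). -/
noncomputable def bern (p : ℝ) : Measure Bool :=
  (PMF.bernoulli (min (Real.toNNReal p) 1) (min_le_right _ _)).toMeasure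

instance (p : ℝ) : IsProbabilityMeasure (bern p) := by
  unfold bern; infer_instance

/-- Independent percolation: product Bernoulli measure on configurations indexed by `E`. -/
noncomputable def perc (E : Type*) [Fintype E] (p : ℝ) : Measure (E → Bool) :=
  Measure.pi fun _ => bern p

variable {V : Type*}

/-- `x` and `y` are joined by an open path all of whose vertices lie in `S`. -/
def OpenConnOn (G : SimpleGraph V) (ω : Sym2 V → Bool) (S : Set V) (x y : V) : Prop :=
  ∃ w : G.Walk x y, (∀ e ∈ w.edges, ω e = true) ∧ ∀ z ∈ w.support, z ∈ S

/-- `x` and `y` are joined by an open path. -/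
def OpenConn (G : SimpleGraph V) (ω : Sym2 V → Bool) (x y : V) : Prop :=
  ∃ w : G.Walk x y, ∀ e ∈ w.edges, ω e = true

/-- A (deterministic, adaptive) routing algorithm: given the history of probed
edges together with their observed status, it chooses the next edge to probe. -/
structure Alg (V : Type*) where
  next : List (Sym2 V × Bool) → Sym2 V

/-- The history (list of probed edges with their status) after `t` probes. -/
def Alg.hist (A : Alg V) (ω : Sym2 V → Bool) : ℕ → List (Sym2 V × Bool)
  | 0 => []
  | t + 1 => (A.next (A.hist ω t), ω (A.next (A.hist ω t))) :: A.hist ω t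

/-- The set of edges probed and found open within the first `t` probes. -/
def Alg.probedOpen (A : Alg V) (ω : Sym2 V → Bool) (t : ℕ) : Set (Sym2 V) :=
  {e | (e, true) ∈ A.hist ω t}

/-- Vertices reachable from `u` using only edges in the set `F`. -/
def reachedFrom (G : SimpleGraph V) (u : V) (F : Set (Sym2 V)) : Set V :=
  {x | ∃ w : G.Walk u x, ∀ e ∈ w.edges, e ∈ F}

/-- A local routing algorithm only probes edges incident to a vertex already
reached from `u` by probed open edges. -/
def Alg.IsLocal (A : Alg V) (G : SimpleGraph V) (u : V) : Prop :=
  ∀ ω t, ∃ x, x ∈ reachedFrom G u (A.probedOpen ω t) ∧ x ∈ A.next (A.hist ω t)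

/-- The algorithm has succeeded within `t` probes: it has certified an open
path from `u` to `v` (all of whose edges were probed and found open). -/
def Alg.SucceedsBy (A : Alg V) (G : SimpleGraph V) (ω : Sym2 V → Bool) (u v : V) (t : ℕ) : Prop :=
  ∃ w : G.Walk u v, ∀ e ∈ w.edges, e ∈ A.probedOpen ω t

/-- The `n`-dimensional hypercube graph on `Fin n → Bool`: two vertices are
adjacent iff they differ in exactly one coordinate. -/
def cube (n : ℕ) : SimpleGraph (Fin n → Bool) where
  Adj x y := hammingDist x y = 1
  symm := ⟨fun x y (h : hammingDist x y = 1) => show hammingDist y x = 1 by rwa [hammingDist_comm]⟩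
  loopless := ⟨fun x (h : hammingDist x x = 1) => by rw [hammingDist_self] at h; exact Nat.zero_ne_one h⟩

instance (n : ℕ) : DecidableRel (cube n).Adj := fun x y => show Decidable (hammingDist x y = 1) from Nat.decEq _ _

namespace CubeBall

variable {n : ℕ}

def flipc (c : Fin n) (z : Fin n → Bool) : Fin n → Bool := Function.update z c (!z c)

def ep (v : Fin n → Bool) (s : List (Fin n)) : Fin n → Bool :=
  fun a => xor (s.count a % 2 == 1) (v a)

lemma flipc_apply (c : Fin n) (z : Fin n → Bool) (a : Fin n) :
    flipc c z a = if a = c then !z c else z a := by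
  simp [flipc, Function.update_apply]

@[simp] lemma ep_nil (v : Fin n → Bool) : ep v ([]) = v := by
  funext a; simp [ep]

lemma flipc_flipc (c : Fin n) (y : Fin n → Bool) : flipc c (flipc c y) = y := by
  funext a
  rcases eq_or_ne a c with rfl | h
  · simp [flipc_apply]
  · simp [flipc_apply, h]

lemma mod2_beq_add (a b : ℕ) : ((a + b) % 2 == 1) = xor (a % 2 == 1) (b % 2 == 1) := by
  rcases Nat.mod_two_eq_zero_or_one a with h | h <;>
    rcases Nat.mod_two_eq_zero_or_one b with h' | h' <;>
      simp [Nat.add_mod, h, h']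

lemma ep_append (v : Fin n → Bool) (s r : List (Fin n)) :
    ep v (s ++ r) = ep (ep v s) r := by
  funext a
  simp only [ep, List.count_append, mod2_beq_add]
  cases h1 : (s.count a % 2 == 1) <;> cases h2 : (r.count a % 2 == 1) <;>
    cases h3 : v a <;> simp [h1, h2, h3, Bool.xor_comm]

lemma ep_single (y : Fin n → Bool) (c : Fin n) : ep y ([c]) = flipc c y := by
  funext a
  rcases eq_or_ne a c with rfl | h
  · simp [ep, flipc_apply, List.count_singleton]
  · simp [ep, flipc_apply, h, List.count_singleton', h, Ne.symm h]

lemma ep_cons (v : Fin n → Bool) (c : Fin n) (s : List (Fin n)) :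
    ep v (c :: s) = ep (flipc c v) s := by
  have : (c :: s) = [c] ++ s := rfl
  rw [this, ep_append, ep_single]

lemma ep_append_single (v : Fin n → Bool) (s : List (Fin n)) (c : Fin n) :
    ep v (s ++ [c]) = flipc c (ep v s) := by
  rw [ep_append, ep_single]

lemma ep_congr (v : Fin n → Bool) {s₁ s₂ : List (Fin n)}
    (h : ∀ a, s₁.count a % 2 = s₂.count a % 2) : ep v s₁ = ep v s₂ := by
  funext a; simp [ep, h a]

lemma ep_apply_eq_iff (v : Fin n → Bool) (s : List (Fin n)) (a : Fin n) :
    ep v s a = v a ↔ s.count a % 2 = 0 := by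
  rcases Nat.mod_two_eq_zero_or_one (s.count a) with h | h <;> simp [ep, h]

lemma hamm_card (v y : Fin n → Bool) :
    hammingDist v y = (Finset.univ.filter fun i => v i ≠ y i).card := rfl

lemma ham_flip_eq {v y : Fin n → Bool} {c : Fin n} (h : y c = v c) :
    hammingDist v (flipc c y) = hammingDist v y + 1 := by
  rw [hamm_card, hamm_card]
  have hs : (Finset.univ.filter fun i => v i ≠ flipc c y i)
      = insert c (Finset.univ.filter fun i => v i ≠ y i) := by
    ext i
    rcases eq_or_ne i c with rfl | hic
    · simp [flipc_apply, h]
    · simp [flipc_apply, hic]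
  rw [hs, Finset.card_insert_of_notMem (by simp [h])]

lemma ham_flip_ne {v y : Fin n → Bool} {c : Fin n} (h : y c ≠ v c) :
    hammingDist v y = hammingDist v (flipc c y) + 1 := by
  have h2 : (flipc c y) c = v c := by
    rw [flipc_apply]; simp only [if_pos rfl]
    cases hy : y c <;> cases hv : v c <;> simp_all
  have := ham_flip_eq (v := v) (y := flipc c y) (c := c) h2
  rwa [flipc_flipc] at this

lemma length_ep (v : Fin n → Bool) (s : List (Fin n)) :
    ∃ k, s.length = hammingDist v (ep v s) + 2 * k := by
  induction s generalizing v with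
  | nil => exact ⟨0, by simp⟩
  | cons c s ih =>
    obtain ⟨k, hk⟩ := ih (flipc c v)
    rw [ep_cons]
    set y := ep (flipc c v) s with hy
    by_cases h : y c = v c
    · -- hammingDist (flipc c v) y = hammingDist v y + 1
      have : hammingDist (flipc c v) y = hammingDist v y + 1 := by
        rw [hammingDist_comm, hammingDist_comm v y]
        exact ham_flip_eq (v := y) (y := v) h.symm
      exact ⟨k + 1, by simp only [List.length_cons]; omega⟩
    · have : hammingDist v y = hammingDist (flipc c v) y + 1 := by
        rw [hammingDist_comm, hammingDist_comm (flipc c v) y]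
        exact ham_flip_ne (v := y) (y := v) (fun hh => h hh.symm)
      exact ⟨k, by simp only [List.length_cons]; omega⟩

lemma ham_ep_le (v : Fin n → Bool) (s : List (Fin n)) :
    hammingDist v (ep v s) ≤ s.length := by
  obtain ⟨k, hk⟩ := length_ep v s; omega



lemma run_up (v : Fin n → Bool) : ∀ (s : List (Fin n)),
    (∀ i (h : i < s.length), (s.take i).count s[i] % 2 = 0) →
    hammingDist v (ep v s) = s.length ∧ ∀ a, s.count a ≤ 1 := by
  intro s
  induction s using List.reverseRecOn with
  | nil => simp
  | append_singleton s c ih =>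
    intro h
    have hlen : (s ++ [c]).length = s.length + 1 := by simp
    have hs : ∀ i (hi : i < s.length), (s.take i).count s[i] % 2 = 0 := by
      intro i hi
      have h1 := h i (by simp; omega)
      rwa [List.take_append, Nat.sub_eq_zero_of_le hi.le, List.take_zero,
        List.append_nil, List.getElem_append_left hi] at h1
    obtain ⟨ih1, ih2⟩ := ih hs
    have hc := h s.length (by simp)
    rw [List.take_append, Nat.sub_self, List.take_zero, List.append_nil,
      List.take_length, List.getElem_append_right (le_refl _)] at hc
    simp only [Nat.sub_self, List.getElem_singleton] at hc
    -- hc : s.count c % 2 = 0 ; with ih2 : count ≤ 1 so count = 0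
    have hc0 : s.count c = 0 := by have := ih2 c; omega
    have hvc : ep v s c = v c := (ep_apply_eq_iff v s c).2 (by omega)
    constructor
    · rw [ep_append_single, ham_flip_eq hvc, ih1, hlen]
    · intro a
      rcases eq_or_ne a c with rfl | hac
      · simp [List.count_append, hc0, List.count_singleton]
      · have := ih2 a
        simp [List.count_append, List.count_singleton', hac, this, Ne.symm hac]

lemma ham_eq_len_count (v : Fin n → Bool) : ∀ (s : List (Fin n)),
    hammingDist v (ep v s) = s.length → ∀ a, s.count a ≤ 1 := by
  intro s
  induction s using List.reverseRecOn with
  | nil => simp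
  | append_singleton s c ih =>
    intro h a
    rw [ep_append_single] at h
    simp only [List.length_append, List.length_singleton] at h
    have hle : hammingDist v (ep v s) ≤ s.length := ham_ep_le v s
    have hflip : hammingDist v (flipc c (ep v s)) ≤ hammingDist v (ep v s) + 1 := by
      by_cases hc : ep v s c = v c
      · rw [ham_flip_eq hc]
      · have := ham_flip_ne (v := v) (y := ep v s) (c := c) hc; omega
    have hse : hammingDist v (ep v s) = s.length := by omega
    have ih2 := ih hse
    have hc0 : s.count c = 0 := by
      by_contra hne
      have h1 : s.count c = 1 := by have := ih2 c; omega
      have : ep v s c ≠ v c := by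
        rw [Ne, ep_apply_eq_iff, h1]; omega
      have := ham_flip_ne (v := v) (y := ep v s) (c := c) this
      omega
    rcases eq_or_ne a c with rfl | hac
    · simp [List.count_append, hc0, List.count_singleton]
    · have := ih2 a
      simp [List.count_append, List.count_singleton', hac, this, Ne.symm hac]

def AA (v x : Fin n → Bool) (l L : ℕ) : Set (List (Fin n)) :=
  {s | s.length = L ∧ (∀ t, hammingDist v (ep v (s.take t)) ≤ l) ∧ ep v s = x}

lemma AA_finite (v x : Fin n → Bool) (l L : ℕ) : (AA v x l L).Finite :=
  (List.finite_length_eq (Fin n) L).subset (fun _ hs => hs.1)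



lemma ep_insert (v : Fin n → Bool) {s₁ s₂ : List (Fin n)} {c : Fin n}
    (h : ∀ a, s₁.count a = s₂.count a + (if c = a then 1 else 0)) :
    ep v s₁ = flipc c (ep v s₂) := by
  funext a
  rcases eq_or_ne a c with rfl | hac
  · have hc := h a
    simp only [if_pos rfl] at hc
    simp only [ep, hc, flipc_apply, if_pos rfl]
    rcases Nat.mod_two_eq_zero_or_one (s₂.count a) with h2 | h2 <;>
      · have : (s₂.count a + 1) % 2 = 1 - s₂.count a % 2 := by omega
        simp [this, h2]
  · have hc := h a
    rw [if_neg (fun hh => hac hh.symm), add_zero] at hc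
    simp [ep, hc, flipc_apply, hac]

set_option maxHeartbeats 1000000 in
lemma exists_encode (v x : Fin n → Bool) (l k : ℕ) (s : List (Fin n))
    (hs : s ∈ AA v x l (l + 2 * (k + 1))) :
    ∃ (s' : List (Fin n)) (c : Fin n) (j t' : ℕ), s' ∈ AA v x l (l + 2 * k) ∧ j < l ∧ t' < l ∧
      s = s'.take j ++ c :: ((s'.drop j).take (t' - j) ++ c :: s'.drop t') := by
  classical
  obtain ⟨hlen, hball, hep⟩ := hs
  have hlpos : 0 < s.length := by omega
  have hne : s ≠ [] := List.ne_nil_of_length_pos hlpos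
  set c₀ : Fin n := s.head hne with hc₀
  have hex : ∃ t, t < s.length ∧ (s.take t).count (s.getD t c₀) % 2 = 1 := by
    by_contra hno
    push_neg at hno
    have hup : ∀ i (h : i < s.length), (s.take i).count s[i] % 2 = 0 := by
      intro i hi
      have := hno i hi
      rw [List.getD_eq_getElem s c₀ hi] at this
      omega
    have := (run_up v s hup).1
    have hb := hball s.length
    rw [List.take_length] at hb
    omega
  obtain ⟨t, ht, hmin⟩ : ∃ t, (t < s.length ∧ (s.take t).count (s.getD t c₀) % 2 = 1) ∧
      ∀ i, i < t → ¬(i < s.length ∧ (s.take i).count (s.getD i c₀) % 2 = 1) :=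
    ⟨Nat.find hex, Nat.find_spec hex, fun i hi => Nat.find_min hex hi⟩
  have htlen : t < s.length := ht.1
  set c : Fin n := s[t] with hcdef
  have htc : (s.take t).count c % 2 = 1 := by
    have := ht.2; rwa [List.getD_eq_getElem s c₀ htlen] at this
  have htpos : 0 < t := by
    rcases Nat.eq_zero_or_pos t with h0 | h0
    · rw [h0] at htc; simp at htc
    · exact h0
  have htake_len : (s.take t).length = t := by
    rw [List.length_take]; omega
  have hrun := run_up v (s.take t) (by
    intro i hi
    rw [htake_len] at hi
    have hilen : i < s.length := lt_trans hi htlen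
    have := hmin i hi
    push_neg at this
    have h2 := this hilen
    rw [List.getD_eq_getElem s c₀ hilen] at h2
    rw [List.take_take, min_eq_left hi.le, List.getElem_take]
    omega)
  have hamt : hammingDist v (ep v (s.take t)) = t := by rw [hrun.1, htake_len]
  have hcnt : ∀ a, (s.take t).count a ≤ 1 := hrun.2
  have htl : t ≤ l := by
    have := hball t; omega
  have hc1 : (s.take t).count c = 1 := by have := hcnt c; omega
  have hcmem : c ∈ s.take t := by
    rw [← List.count_pos_iff]; omega
  set j : ℕ := (s.take t).idxOf c with hjdef
  have hjt : j < t := by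
    have := List.idxOf_lt_length_iff.2 hcmem
    rwa [htake_len] at this
  have hjlen : j < s.length := lt_trans hjt htlen
  have hgetj : (s.take t)[j]'(by rw [htake_len]; exact hjt) = c :=
    List.getElem_idxOf (by rw [htake_len]; exact hjt)
  set p := s.take j with hpdef
  set mid := (s.take t).drop (j + 1) with hmiddef
  set r := s.drop (t + 1) with hrdef
  have hp_len : p.length = j := by rw [hpdef, List.length_take]; omega
  have hmid_len : mid.length = t - (j + 1) := by
    rw [hmiddef, List.length_drop, htake_len]
  have hr_len : r.length = s.length - (t + 1) := by rw [hrdef, List.length_drop]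
  have hdecomp1 : s.take t = p ++ c :: mid := by
    conv_lhs => rw [← List.take_append_drop j (s.take t),
      List.drop_eq_getElem_cons (by rw [htake_len]; exact hjt), hgetj]
    rw [List.take_take, min_eq_left hjt.le]
  have hdecomp2 : s = s.take t ++ c :: r := by
    conv_lhs => rw [← List.take_append_drop t s, List.drop_eq_getElem_cons htlen]
  have hse : s = p ++ c :: (mid ++ c :: r) := by
    rw [hdecomp2, hdecomp1]
    simp [List.append_assoc]
  have hcp : (p.count c = 0) ∧ (mid.count c = 0) := by
    rw [hdecomp1] at hc1
    simp only [List.count_append, List.count_cons_self] at hc1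
    omega
  set s' := p ++ (mid ++ r) with hs'def
  have hs'_len : s'.length = l + 2 * k := by
    have h0 : s'.length = p.length + (mid.length + r.length) := by
      simp [hs'def]
    rw [h0, hp_len, hmid_len, hr_len]
    omega
  have hcount_full : ∀ a, s.count a % 2 = s'.count a % 2 := by
    intro a
    rw [hse, hs'def]
    rcases eq_or_ne c a with rfl | hca
    · simp only [List.count_append, List.count_cons_self]; omega
    · simp only [List.count_append, List.count_cons_of_ne hca]
  have hep' : ep v s' = x := by
    rw [← hep]
    exact (ep_congr v (fun a => (hcount_full a).symm))
  have htake1 : ∀ u, u ≤ j → s'.take u = s.take u := by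
    intro u hu
    rw [hs'def, List.take_append, hp_len,
      show u - j = 0 by omega, List.take_zero, List.append_nil,
      hpdef, List.take_take, min_eq_left hu]
  have htake2 : ∀ u, j ≤ u → u ≤ j + mid.length →
      s'.take u = p ++ mid.take (u - j) ∧ s.take (u + 1) = p ++ c :: mid.take (u - j) := by
    intro u hu1 hu2
    constructor
    · rw [hs'def, List.take_append, hp_len,
        List.take_of_length_le (by rw [hp_len]; exact hu1),
        List.take_append,
        show u - j - mid.length = 0 by omega, List.take_zero, List.append_nil]
    · rw [hse, List.take_append, hp_len,
        List.take_of_length_le (by rw [hp_len]; omega),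
        show u + 1 - j = (u - j) + 1 by omega, List.take_succ_cons,
        List.take_append,
        show u - j - mid.length = 0 by omega, List.take_zero, List.append_nil]
  have htake3 : ∀ u, j + mid.length ≤ u →
      s'.take u = p ++ (mid ++ r.take (u - j - mid.length)) ∧
      s.take (u + 2) = p ++ c :: (mid ++ c :: r.take (u - j - mid.length)) := by
    intro u hu
    constructor
    · rw [hs'def, List.take_append, hp_len,
        List.take_of_length_le (by rw [hp_len]; omega),
        List.take_append,
        List.take_of_length_le (by omega)]
    · rw [hse, List.take_append, hp_len,
        List.take_of_length_le (by rw [hp_len]; omega),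
        show u + 2 - j = (u + 1 - j) + 1 by omega, List.take_succ_cons,
        List.take_append,
        List.take_of_length_le (by omega),
        show u + 1 - j - mid.length = (u - j - mid.length) + 1 by omega,
        List.take_succ_cons]
  have hball' : ∀ u, hammingDist v (ep v (s'.take u)) ≤ l := by
    intro u
    rcases le_or_gt u j with hu | hu
    · rw [htake1 u hu]; exact hball u
    · rcases le_or_gt u (j + mid.length) with hu2 | hu2
      · obtain ⟨e1, e2⟩ := htake2 u hu.le hu2
        have hcountrel : ∀ a, (s.take (u + 1)).count a
            = (s'.take u).count a + (if c = a then 1 else 0) := by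
          intro a
          rw [e1, e2]
          rcases eq_or_ne c a with rfl | hca
          · simp only [List.count_append, List.count_cons_self, eq_self_iff_true, if_true]; omega
          · simp [List.count_append, List.count_cons_of_ne (Ne.symm hca), hca]
        have heq : ep v (s.take (u + 1)) = flipc c (ep v (s'.take u)) :=
          ep_insert v hcountrel
        have hvc : ep v (s'.take u) c = v c := by
          rw [ep_apply_eq_iff, e1]
          have hcmid : c ∉ mid := List.count_eq_zero.1 hcp.2
          have h5 : (mid.take (u - j)).count c = 0 :=
            List.count_eq_zero.2 (fun hmem => hcmid (List.mem_of_mem_take hmem))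
          simp [List.count_append, hcp.1, h5]
        have := hball (u + 1)
        rw [heq, ham_flip_eq hvc] at this
        omega
      · obtain ⟨e1, e2⟩ := htake3 u (by omega)
        have hcr : ∀ a, (s'.take u).count a % 2 = (s.take (u + 2)).count a % 2 := by
          intro a
          rw [e1, e2]
          rcases eq_or_ne c a with rfl | hca
          · simp only [List.count_append, List.count_cons_self]; omega
          · simp only [List.count_append, List.count_cons_of_ne hca]
        rw [ep_congr v hcr]
        exact hball (u + 2)
  refine ⟨s', c, j, t - 1, ⟨hs'_len, hball', hep'⟩, by omega, by omega, ?_⟩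
  have h1 : s'.take j = p := by
    rw [hs'def, show j = p.length from hp_len.symm, List.take_left]
  have h2 : s'.drop j = mid ++ r := by
    rw [hs'def, show j = p.length from hp_len.symm, List.drop_left]
  have h3 : (s'.drop j).take (t - 1 - j) = mid := by
    rw [h2, show t - 1 - j = mid.length by omega, List.take_left]
  have h4 : s'.drop (t - 1) = r := by
    rw [hs'def, ← List.append_assoc,
      show t - 1 = (p ++ mid).length by simp [hp_len, hmid_len]; omega,
      List.drop_left]
  rw [h1, h3, h4, hse]

lemma card_AA_zero (v x : Fin n → Bool) (l : ℕ) (hd : hammingDist v x = l) :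
    Nat.card (AA v x l l) ≤ l ^ l := by
  classical
  set D := (Finset.univ.filter fun a => v a ≠ x a) with hDdef
  have hD : D.card = l := by rw [hDdef, ← hamm_card v x]; exact hd
  have hcnt : ∀ s, s ∈ AA v x l l → ∀ a, s.count a ≤ 1 := by
    intro s hs
    apply ham_eq_len_count v s
    rw [hs.2.2, hs.1, hd]
  have hmem : ∀ (s : List (Fin n)) (hs : s ∈ AA v x l l) (i : ℕ) (hi : i < s.length),
      s[i] ∈ D := by
    intro s hs i hi
    have h1 : 1 ≤ s.count s[i] := List.count_pos_iff.2 (List.getElem_mem hi)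
    have h2 := hcnt s hs s[i]
    have h3 : s.count s[i] % 2 = 1 := by omega
    have h4 : ep v s s[i] ≠ v s[i] := by
      rw [Ne, ep_apply_eq_iff]; omega
    rw [hs.2.2] at h4
    rw [hDdef, Finset.mem_filter]
    exact ⟨Finset.mem_univ _, fun hh => h4 (by rw [hh])⟩
  let f : ↥(AA v x l l) → (Fin l → ↥D) := fun s i =>
    ⟨(s : List (Fin n))[(i : ℕ)]'(by rw [s.2.1]; exact i.2), hmem s s.2 i _⟩
  have hinj : Function.Injective f := by
    intro s₁ s₂ h
    apply Subtype.ext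
    apply List.ext_getElem (by rw [s₁.2.1, s₂.2.1])
    intro i h1 h2
    have hi : i < l := by rw [← s₁.2.1]; exact h1
    have := congrFun h ⟨i, hi⟩
    simpa [f, Subtype.ext_iff] using this
  calc Nat.card (AA v x l l) ≤ Nat.card (Fin l → ↥D) := by
        have : Finite (Fin l → ↥D) := by infer_instance
        exact Nat.card_le_card_of_injective f hinj
    _ = l ^ l := by
        rw [Nat.card_eq_fintype_card, Fintype.card_fun, Fintype.card_coe, hD, Fintype.card_fin]

lemma card_AA_succ (v x : Fin n → Bool) (l k : ℕ) :
    Nat.card (AA v x l (l + 2 * (k + 1))) ≤ Nat.card (AA v x l (l + 2 * k)) * (n * (l * l)) := by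
  classical
  have hfin : Finite ↥(AA v x l (l + 2 * k)) := (AA_finite v x l _).to_subtype
  have hchoice : ∀ s : ↥(AA v x l (l + 2 * (k + 1))),
      ∃ y : ↥(AA v x l (l + 2 * k)) × Fin n × Fin l × Fin l,
      (s : List (Fin n)) = (y.1 : List (Fin n)).take (y.2.2.1 : ℕ) ++ (y.2.1 : Fin n) ::
        (((y.1 : List (Fin n))).drop (y.2.2.1 : ℕ)).take ((y.2.2.2 : ℕ) - (y.2.2.1 : ℕ)) ++
          (y.2.1 : Fin n) :: ((y.1 : List (Fin n))).drop (y.2.2.2 : ℕ) := by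
    rintro ⟨s, hs⟩
    obtain ⟨s', c, j, t', hmem, hj, ht', hrec⟩ := exists_encode v x l k s hs
    exact ⟨⟨⟨s', hmem⟩, c, ⟨j, hj⟩, ⟨t', ht'⟩⟩, by simpa using hrec⟩
  choose g hg using hchoice
  have hinj : Function.Injective g := by
    intro a b hab
    apply Subtype.ext
    rw [hg a, hg b, hab]
  calc Nat.card (AA v x l (l + 2 * (k + 1)))
      ≤ Nat.card (↥(AA v x l (l + 2 * k)) × Fin n × Fin l × Fin l) :=
        Nat.card_le_card_of_injective g hinj
    _ = Nat.card (AA v x l (l + 2 * k)) * (n * (l * l)) := by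
        rw [Nat.card_prod, Nat.card_prod, Nat.card_prod]
        simp [Nat.card_eq_fintype_card, mul_assoc]

lemma card_AA_le (v x : Fin n → Bool) (l : ℕ) (hd : hammingDist v x = l) (k : ℕ) :
    Nat.card (AA v x l (l + 2 * k)) ≤ l ^ l * (n * (l * l)) ^ k := by
  induction k with
  | zero => simpa using card_AA_zero v x l hd
  | succ k ih =>
    calc Nat.card (AA v x l (l + 2 * (k + 1)))
        ≤ Nat.card (AA v x l (l + 2 * k)) * (n * (l * l)) := card_AA_succ v x l k
      _ ≤ l ^ l * (n * (l * l)) ^ k * (n * (l * l)) := Nat.mul_le_mul_right _ ih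
      _ = l ^ l * (n * (l * l)) ^ (k + 1) := by ring

def eList (v : Fin n → Bool) : List (Fin n) → List (Sym2 (Fin n → Bool))
  | [] => []
  | c :: s => s(v, flipc c v) :: eList (flipc c v) s

@[simp] lemma eList_nil (v : Fin n → Bool) : eList v ([]) = [] := rfl

@[simp] lemma eList_cons (v : Fin n → Bool) (c : Fin n) (s : List (Fin n)) :
    eList v (c :: s) = s(v, flipc c v) :: eList (flipc c v) s := rfl

lemma eList_length (v : Fin n → Bool) (s : List (Fin n)) : (eList v s).length = s.length := by
  induction s generalizing v with
  | nil => rfl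
  | cons c s ih => simp [ih]

lemma adj_flip {a b : Fin n → Bool} (h : (cube n).Adj a b) : ∃ c, b = flipc c a := by
  have h1 : hammingDist a b = 1 := h
  rw [hamm_card] at h1
  obtain ⟨c, hc⟩ := Finset.card_eq_one.1 h1
  refine ⟨c, funext fun i => ?_⟩
  rcases eq_or_ne i c with rfl | hic
  · have : i ∈ (Finset.univ.filter fun j => a j ≠ b j) := by
      rw [hc]; exact Finset.mem_singleton_self i
    rw [Finset.mem_filter] at this
    rw [flipc_apply, if_pos rfl]
    cases hai : a i <;> cases hbi : b i <;> simp_all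
  · have : i ∉ (Finset.univ.filter fun j => a j ≠ b j) := by
      rw [hc]; simp [hic]
    rw [Finset.mem_filter] at this
    push_neg at this
    rw [flipc_apply, if_neg hic]
    exact (this (Finset.mem_univ i)).symm

lemma walk_to_list {a b : Fin n → Bool} (w : (cube n).Walk a b) :
    ∃ s : List (Fin n), s.length = w.length ∧ ep a s = b ∧ eList a s = w.edges ∧
      ∀ t, ep a (s.take t) ∈ w.support := by
  induction w with
  | nil => exact ⟨[], by simp, by simp, by simp, fun t => by simp⟩
  | @cons u v' w' h p ih =>
    obtain ⟨c, rfl⟩ := adj_flip h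
    obtain ⟨s, hs1, hs2, hs3, hs4⟩ := ih
    refine ⟨c :: s, by simp [hs1], by rw [ep_cons]; exact hs2, by simp [hs3], ?_⟩
    intro t
    cases t with
    | zero => simp
    | succ t =>
      rw [List.take_succ_cons, ep_cons]
      rw [SimpleGraph.Walk.support_cons]
      exact List.mem_cons_of_mem _ (hs4 t)

lemma perc_cyl (p : ℝ) (hp1 : p ≤ 1) (v : Fin n → Bool) (s : List (Fin n))
    (hnd : (eList v s).Nodup) :
    perc (Sym2 (Fin n → Bool)) p {ω | ∀ e ∈ eList v s, ω e = true}
      = (ENNReal.ofReal p) ^ s.length := by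
  classical
  have hset : {ω : Sym2 (Fin n → Bool) → Bool | ∀ e ∈ eList v s, ω e = true}
      = Set.univ.pi (fun e => if e ∈ eList v s then ({true} : Set Bool) else Set.univ) := by
    ext ω
    simp only [Set.mem_setOf_eq, Set.mem_pi, Set.mem_univ, forall_true_left]
    constructor
    · intro h e
      by_cases he : e ∈ eList v s
      · simp [he, h e he]
      · simp [he]
    · intro h e he
      have := h e
      rw [if_pos he] at this
      simpa using this
  rw [perc, hset, MeasureTheory.Measure.pi_pi]
  have hbern : ∀ e : Sym2 (Fin n → Bool),
      bern p (if e ∈ eList v s then ({true} : Set Bool) else Set.univ)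
        = if e ∈ eList v s then ENNReal.ofReal p else 1 := by
    intro e
    by_cases he : e ∈ eList v s
    · rw [if_pos he, if_pos he]
      have h1 : bern p {true} = min (ENNReal.ofReal p) 1 := by
        rw [bern, PMF.toMeasure_apply_singleton _ _ (measurableSet_singleton _)]
        simp [PMF.bernoulli]
        rfl
      rw [h1, min_eq_left (ENNReal.ofReal_le_one.2 hp1)]
    · rw [if_neg he, if_neg he]
      exact measure_univ
  rw [Finset.prod_congr rfl (fun e _ => hbern e), ← Finset.prod_filter, Finset.prod_const]
  congr 1
  have h2 : Finset.univ.filter (fun e => e ∈ eList v s) = (eList v s).toFinset := by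
    ext e; simp
  rw [h2, List.toFinset_card_of_nodup hnd, eList_length]

end CubeBall

open CubeBall

/-- **Probability of reaching the boundary of a ball in the percolated
hypercube.** With `p = n^{-α}`, `0 < β < α - 1/2` and `l = n^β`, the
probability that `v` is connected to a vertex `x` at Hamming distance `l` by an
open path contained in the ball of radius `l` around `v` is at most
`(lp)^l / (1 - n^{2β+1-2α})`. -/
theorem cube_ball_connection_prob_le (α β : ℝ) (hβ : 0 < β) (hαβ : β < α - 1 / 2)
    (n l : ℕ) (hn : 2 ≤ n) (hl : (l : ℝ) = (n : ℝ) ^ β)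
    (v x : Fin n → Bool) (hd : hammingDist v x = l) :
    perc (Sym2 (Fin n → Bool)) ((n : ℝ) ^ (-α))
        {ω | OpenConnOn (cube n) ω {z | hammingDist v z ≤ l} v x}
      ≤ ENNReal.ofReal
          (((l : ℝ) * (n : ℝ) ^ (-α)) ^ l / (1 - (n : ℝ) ^ (2 * β + 1 - 2 * α))) := by
  classical
  have hn1 : (1:ℝ) < (n:ℝ) := by exact_mod_cast hn
  have hn0 : (0:ℝ) < (n:ℝ) := by linarith
  set P : ℝ := (n:ℝ) ^ (-α) with hP
  have hα : (0:ℝ) < α := by linarith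
  have hp0 : 0 ≤ P := Real.rpow_nonneg hn0.le _
  have hp1 : P ≤ 1 := Real.rpow_le_one_of_one_le_of_nonpos hn1.le (by linarith)
  set q : ℝ≥0∞ := ENNReal.ofReal P with hq
  set rr : ℝ := (n:ℝ) ^ (2*β + 1 - 2*α) with hrr
  have hrr0 : 0 ≤ rr := Real.rpow_nonneg hn0.le _
  have hrr1 : rr < 1 := Real.rpow_lt_one_of_one_lt_of_neg hn1 (by linarith)
  -- the covering family
  set A' : ℕ → Set (List (Fin n)) :=
    fun k => {s | s ∈ AA v x l (l + 2*k) ∧ (eList v s).Nodup} with hA'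
  have hA'fin : ∀ k, (A' k).Finite :=
    fun k => (AA_finite v x l _).subset (fun s hs => hs.1)
  have hcover : {ω : Sym2 (Fin n → Bool) → Bool |
        OpenConnOn (cube n) ω {z | hammingDist v z ≤ l} v x}
      ⊆ ⋃ (k : ℕ), ⋃ s ∈ (hA'fin k).toFinset, {ω | ∀ e ∈ eList v s, ω e = true} := by
    rintro ω ⟨w₀, hopen, hsupp⟩
    obtain ⟨s, hs1, hs2, hs3, hs4⟩ := walk_to_list w₀.bypass
    obtain ⟨k, hk⟩ := length_ep v s
    rw [hs2, hd] at hk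
    refine Set.mem_iUnion.2 ⟨k, Set.mem_iUnion₂.2 ⟨s, (hA'fin k).mem_toFinset.2 ?_, ?_⟩⟩
    · refine ⟨⟨hk, ?_, hs2⟩, ?_⟩
      · intro t
        exact hsupp _ (w₀.support_bypass_subset (hs4 t))
      · rw [hs3]
        exact (SimpleGraph.Walk.bypass_isPath w₀).isTrail.edges_nodup
    · intro e he
      exact hopen e (w₀.edges_bypass_subset (hs3 ▸ he))
  have hcard : ∀ k, ((hA'fin k).toFinset.card : ℝ≥0∞)
      ≤ ((l ^ l * (n * (l * l)) ^ k : ℕ) : ℝ≥0∞) := by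
    intro k
    have h1 : (hA'fin k).toFinset.card = Nat.card (A' k) := by
      rw [Nat.card_coe_set_eq, Set.ncard_eq_toFinset_card (A' k) (hA'fin k)]
    have h2 : Nat.card (A' k) ≤ Nat.card (AA v x l (l + 2*k)) :=
      Nat.card_mono (AA_finite v x l _) (fun s hs => hs.1)
    have h3 := (h2.trans (card_AA_le v x l hd k))
    rw [h1]
    exact_mod_cast h3
  calc (perc (Sym2 (Fin n → Bool)) P
        {ω | OpenConnOn (cube n) ω {z | hammingDist v z ≤ l} v x})
      ≤ ∑' (k : ℕ), perc (Sym2 (Fin n → Bool)) P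
          (⋃ s ∈ (hA'fin k).toFinset, {ω | ∀ e ∈ eList v s, ω e = true}) :=
        (measure_mono hcover).trans (measure_iUnion_le _)
    _ ≤ ∑' (k : ℕ), ((l:ℝ≥0∞)^l * q^l) * (((n:ℝ≥0∞) * ((l:ℝ≥0∞)*(l:ℝ≥0∞))) * q^2)^k := by
        refine ENNReal.tsum_le_tsum (fun k => ?_)
        calc (perc (Sym2 (Fin n → Bool)) P
              (⋃ s ∈ (hA'fin k).toFinset, {ω | ∀ e ∈ eList v s, ω e = true}))
            ≤ ∑ s ∈ (hA'fin k).toFinset,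
                perc (Sym2 (Fin n → Bool)) P {ω | ∀ e ∈ eList v s, ω e = true} :=
              measure_biUnion_finset_le _ _
          _ = ∑ s ∈ (hA'fin k).toFinset, q ^ (l + 2*k) := by
              refine Finset.sum_congr rfl (fun s hs => ?_)
              rw [(hA'fin k).mem_toFinset] at hs
              rw [perc_cyl P hp1 v s hs.2, hs.1.1, hq]
          _ = ((hA'fin k).toFinset.card : ℝ≥0∞) * q ^ (l + 2*k) := by
              rw [Finset.sum_const, nsmul_eq_mul]
          _ ≤ ((l ^ l * (n * (l * l)) ^ k : ℕ) : ℝ≥0∞) * q ^ (l + 2*k) :=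
              mul_le_mul_left (hcard k) _
          _ = ((l:ℝ≥0∞)^l * q^l) * (((n:ℝ≥0∞) * ((l:ℝ≥0∞)*(l:ℝ≥0∞))) * q^2)^k := by
              push_cast
              ring
    _ = ((l:ℝ≥0∞)^l * q^l) * (1 - ((n:ℝ≥0∞) * ((l:ℝ≥0∞)*(l:ℝ≥0∞))) * q^2)⁻¹ := by
        rw [ENNReal.tsum_mul_left, ENNReal.tsum_geometric]
    _ = ENNReal.ofReal (((l:ℝ) * P)^l) * (1 - ENNReal.ofReal rr)⁻¹ := by
        have hR : ((n:ℝ≥0∞) * ((l:ℝ≥0∞)*(l:ℝ≥0∞))) * q^2 = ENNReal.ofReal rr := by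
          rw [hq, ← ENNReal.ofReal_natCast n, ← ENNReal.ofReal_natCast l,
            ← ENNReal.ofReal_mul (Nat.cast_nonneg l),
            ← ENNReal.ofReal_mul (Nat.cast_nonneg n),
            ← ENNReal.ofReal_pow hp0,
            ← ENNReal.ofReal_mul (by positivity)]
          congr 1
          rw [hl, hP, pow_two, hrr, show 2*β+1-2*α = (1 + (β+β)) + (-α + -α) by ring,
            Real.rpow_add hn0, Real.rpow_add hn0, Real.rpow_add hn0, Real.rpow_add hn0, Real.rpow_one]
        have hlq : (l:ℝ≥0∞)^l * q^l = ENNReal.ofReal (((l:ℝ) * P)^l) := by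
          rw [hq, ← ENNReal.ofReal_natCast l, ← mul_pow,
            ← ENNReal.ofReal_mul (Nat.cast_nonneg l),
            ← ENNReal.ofReal_pow (by positivity)]
        rw [hR, hlq]
    _ = ENNReal.ofReal (((l:ℝ) * P)^l / (1 - rr)) := by
        rw [← ENNReal.ofReal_one, ← ENNReal.ofReal_sub 1 hrr0,
          ← ENNReal.ofReal_inv_of_pos (by linarith),
          ← ENNReal.ofReal_mul (by positivity), div_eq_mul_inv]
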